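/- Let d ≥ 2 be even and let m ≥ 1 be an integer. Then the lattice width of S(d,m) equals 2m; that is, for every vector w ∈ ℤ^{d+1} that is not constant (not all coordinates equal), max_{0≤i≤d} ⟨w, v^{(i)}⟩ − min_{0≤i≤d} ⟨w, v^{(i)}⟩ ≥ 2m, and there exists a non-constant w ∈ ℤ^{d+1} (e.g., a standard coordinate functional) for which this difference equals exactly 2m. -/

import Mathlib

/-- The `i`-th vertex of the circulant simplex `S(d,m)` (integer coordinates, indexed by
`Fin (d+1)`, i.e. modulo `d+1`): coordinate `j` is `1` if `j = i`, `m` if `j ≡ i+1`,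
`-m` if `j ≡ i-1`, and `0` otherwise. -/
def vvec (d : ℕ) (m : ℤ) (i : Fin (d+1)) : Fin (d+1) → ℤ :=
  fun j => if j = i then 1 else if j = i + 1 then m else if j = i - 1 then -m else 0

namespace Stmt11Aux

open Fin.CommRing

lemma fin_one_ne_zero (d : ℕ) (hd : 2 ≤ d) : (1 : Fin (d+1)) ≠ 0 := by
  have h : ((1:ℕ) : Fin (d+1)) = (1 : Fin (d+1)) := by push_cast; rfl
  rw [← h, Ne, Fin.natCast_eq_zero]
  intro hdvd
  exact absurd (Nat.le_of_dvd one_pos hdvd) (by omega)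

lemma fin_two_ne_zero (d : ℕ) (hd : 2 ≤ d) : (2 : Fin (d+1)) ≠ 0 := by
  have h : ((2:ℕ) : Fin (d+1)) = (2 : Fin (d+1)) := by push_cast; rfl
  rw [← h, Ne, Fin.natCast_eq_zero]
  intro hdvd
  exact absurd (Nat.le_of_dvd two_pos hdvd) (by omega)

lemma sum_vvec (d : ℕ) (hd : 2 ≤ d) (m : ℤ) (w : Fin (d+1) → ℤ) (i : Fin (d+1)) :
    ∑ j, w j * vvec d m i j = w i + m * (w (i+1) - w (i-1)) := by
  have h1 : (1 : Fin (d+1)) ≠ 0 := fin_one_ne_zero d hd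
  have h2 : (2 : Fin (d+1)) ≠ 0 := fin_two_ne_zero d hd
  have hia : i + 1 ≠ i := fun h => h1 (by linear_combination h)
  have hic : i + 1 ≠ i - 1 := fun h => h2 (by linear_combination h)
  have hib : i - 1 ≠ i := fun h => h1 (by linear_combination -h)
  have key : ∀ j, w j * vvec d m i j =
      (if j = i then w i else 0) + ((if j = i+1 then w (i+1) * m else 0)
        + (if j = i-1 then w (i-1) * (-m) else 0)) := by
    intro j
    simp only [vvec]
    rcases eq_or_ne j i with e1 | e1
    · subst e1
      rw [if_pos rfl, if_pos rfl, if_neg (Ne.symm hia), if_neg (Ne.symm hib)]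
      ring
    · rw [if_neg e1, if_neg e1]
      rcases eq_or_ne j (i+1) with e2 | e2
      · subst e2
        rw [if_pos rfl, if_pos rfl, if_neg hic]
        ring
      · rw [if_neg e2, if_neg e2]
        rcases eq_or_ne j (i-1) with e3 | e3
        · subst e3
          rw [if_pos rfl, if_pos rfl]
          ring
        · rw [if_neg e3, if_neg e3]
          ring
  rw [Finset.sum_congr rfl (fun j _ => key j)]
  rw [Finset.sum_add_distrib, Finset.sum_add_distrib]
  simp [Finset.sum_ite_eq']
  ring

lemma fin_dp2_cast (d : ℕ) : (((d+1)+1 : ℕ) : Fin (d+1)) = (1 : Fin (d+1)) := by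
  rw [Nat.cast_add, Fin.natCast_self, Nat.cast_one, zero_add]

lemma const_of_step (d : ℕ) (w : Fin (d+1) → ℤ) (h : ∀ i, w (i+1) = w i)
    (i j : Fin (d+1)) : w i = w j := by
  have hk : ∀ k : ℕ, w (j + (k : Fin (d+1))) = w j := by
    intro k
    induction k with
    | zero => simp
    | succ k ih =>
        have e : ((k+1 : ℕ) : Fin (d+1)) = ((k : ℕ) : Fin (d+1)) + 1 := by push_cast; ring
        rw [e, ← add_assoc, h]
        exact ih
  have := hk (i - j).val
  rw [Fin.cast_val_eq_self] at this
  rw [show j + (i - j) = i by ring] at this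
  exact this

lemma const_of_symm (d : ℕ) (hde : Even d) (w : Fin (d+1) → ℤ)
    (h : ∀ i, w (i+1) = w (i-1)) (i j : Fin (d+1)) : w i = w j := by
  have h2 : ∀ x : Fin (d+1), w (x + 2) = w x := by
    intro x
    have := h (x + 1)
    rw [show x + 1 + 1 = x + 2 by ring, show x + 1 - 1 = x by ring] at this
    exact this
  have hk : ∀ k : ℕ, ∀ x : Fin (d+1), w (x + ((2*k : ℕ) : Fin (d+1))) = w x := by
    intro k
    induction k with
    | zero => simp
    | succ k ih =>
        intro x
        have e : ((2*(k+1) : ℕ) : Fin (d+1)) = ((2*k : ℕ) : Fin (d+1)) + 2 := by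
          push_cast; ring
        rw [e, ← add_assoc, show x + ((2*k : ℕ) : Fin (d+1)) + 2
            = (x + 2) + ((2*k : ℕ) : Fin (d+1)) by ring, ih (x + 2), h2]
  obtain ⟨t, ht⟩ := hde
  have hstep : ∀ x : Fin (d+1), w (x + 1) = w x := by
    intro x
    have e1 : ((2*(t+1) : ℕ) : Fin (d+1)) = (1 : Fin (d+1)) := by
      rw [show (2*(t+1) : ℕ) = (d+1)+1 by omega, fin_dp2_cast]
    have := hk (t+1) x
    rw [e1] at this
    exact this
  exact const_of_step d w hstep i j

lemma key_pair (d : ℕ) (hd : 2 ≤ d) (hde : Even d) (w : Fin (d+1) → ℤ)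
    (hw : ∃ i j, w i ≠ w j) :
    ∃ a b : Fin (d+1), w b ≤ w a ∧ 1 ≤ w (a+1) - w (a-1) ∧ w (b+1) - w (b-1) ≤ -1 := by
  by_contra hcon
  push_neg at hcon
  obtain ⟨i0, j0', hij⟩ := hw
  have hgsum : ∑ i, (w (i+1) - w (i-1)) = 0 := by
    have e1 : ∑ i, w (i+1) = ∑ i, w i := Equiv.sum_comp (Equiv.addRight 1) w
    have e2 : ∑ i, w (i-1) = ∑ i, w i := Equiv.sum_comp (Equiv.subRight 1) w
    rw [Finset.sum_sub_distrib, e1, e2, sub_self]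
  have hsymm_contra : ¬ (∀ i, w (i+1) = w (i-1)) := by
    intro hsym
    exact hij (const_of_symm d hde w hsym i0 j0')
  have hP : ∃ a : Fin (d+1), 1 ≤ w (a+1) - w (a-1) := by
    by_contra hnp
    push_neg at hnp
    apply hsymm_contra
    intro i
    have hz : ∀ i ∈ Finset.univ, (0:ℤ) ≤ -(w (i+1) - w (i-1)) := by
      intro i _
      have := hnp i
      omega
    have hsz : ∑ i, -(w (i+1) - w (i-1)) = 0 := by
      rw [Finset.sum_neg_distrib, hgsum, neg_zero]
    have := (Finset.sum_eq_zero_iff_of_nonneg hz).mp hsz i (Finset.mem_univ i)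
    omega
  have hN : ∃ b : Fin (d+1), w (b+1) - w (b-1) ≤ -1 := by
    by_contra hnn
    push_neg at hnn
    apply hsymm_contra
    intro i
    have hz : ∀ i ∈ Finset.univ, (0:ℤ) ≤ (w (i+1) - w (i-1)) := by
      intro i _
      have := hnn i
      omega
    have := (Finset.sum_eq_zero_iff_of_nonneg hz).mp hgsum i (Finset.mem_univ i)
    omega
  obtain ⟨a0, ha0⟩ := hP
  obtain ⟨b', hb'⟩ := hN
  obtain ⟨b0, hb0mem, hb0min⟩ := Finset.exists_min_image
    (Finset.univ.filter (fun b : Fin (d+1) => w (b+1) - w (b-1) ≤ -1)) w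
    ⟨b', Finset.mem_filter.mpr ⟨Finset.mem_univ b', hb'⟩⟩
  have hb0 : w (b0+1) - w (b0-1) ≤ -1 := (Finset.mem_filter.mp hb0mem).2
  set c : ℤ := w b0 with hc
  have R1 : ∀ j : Fin (d+1), c ≤ w (j+1) → w (j+2) ≤ w j := by
    intro j h
    by_contra hlt
    push_neg at hlt
    have hga : 1 ≤ w ((j+1)+1) - w ((j+1)-1) := by
      rw [show (j+1)+1 = j+2 by ring, show (j+1)-1 = j by ring]
      omega
    have := hcon (j+1) b0 h hga
    omega
  have R2 : ∀ j : Fin (d+1), w (j+1) < c → w j ≤ w (j+2) := by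
    intro j h
    by_contra hlt
    push_neg at hlt
    have hgb : w ((j+1)+1) - w ((j+1)-1) ≤ -1 := by
      rw [show (j+1)+1 = j+2 by ring, show (j+1)-1 = j by ring]
      omega
    have := hb0min (j+1) (Finset.mem_filter.mpr ⟨Finset.mem_univ _, hgb⟩)
    omega
  have halow : w a0 < c := by
    by_contra hge
    push_neg at hge
    have := hcon a0 b0 hge ha0
    omega
  have hcross : ∃ x : Fin (d+1), w x < c ∧ c ≤ w (x+1) := by
    by_contra hc2
    push_neg at hc2
    have hall : ∀ k : ℕ, w (a0 + (k : Fin (d+1))) < c := by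
      intro k
      induction k with
      | zero => simpa using halow
      | succ k ih =>
          have e : ((k+1 : ℕ) : Fin (d+1)) = ((k : ℕ) : Fin (d+1)) + 1 := by push_cast; ring
          rw [e, ← add_assoc]
          exact hc2 _ ih
    have := hall (b0 - a0).val
    rw [Fin.cast_val_eq_self, show a0 + (b0 - a0) = b0 by ring] at this
    omega
  obtain ⟨x0, hx0, hx1⟩ := hcross
  have halt : ∀ k : ℕ, w (x0 + ((2*k : ℕ) : Fin (d+1))) < c ∧
      c ≤ w (x0 + ((2*k : ℕ) : Fin (d+1)) + 1) := by
    intro k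
    induction k with
    | zero => simpa using ⟨hx0, hx1⟩
    | succ k ih =>
        obtain ⟨ih1, ih2⟩ := ih
        have e : ((2*(k+1) : ℕ) : Fin (d+1)) = ((2*k : ℕ) : Fin (d+1)) + 2 := by
          push_cast; ring
        have g1 : w ((x0 + ((2*k : ℕ) : Fin (d+1))) + 2) ≤ w (x0 + ((2*k : ℕ) : Fin (d+1))) :=
          R1 _ ih2
        have hnew1 : w ((x0 + ((2*k : ℕ) : Fin (d+1))) + 2) < c := lt_of_le_of_lt g1 ih1
        have g2 : w ((x0 + ((2*k : ℕ) : Fin (d+1))) + 1)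
            ≤ w (((x0 + ((2*k : ℕ) : Fin (d+1))) + 1) + 2) := by
          apply R2
          rw [show ((x0 + ((2*k : ℕ) : Fin (d+1))) + 1) + 1
            = (x0 + ((2*k : ℕ) : Fin (d+1))) + 2 by ring]
          exact hnew1
        constructor
        · rw [e, show x0 + (((2*k : ℕ) : Fin (d+1)) + 2)
            = (x0 + ((2*k : ℕ) : Fin (d+1))) + 2 by ring]
          exact hnew1
        · rw [e, show x0 + (((2*k : ℕ) : Fin (d+1)) + 2) + 1
            = ((x0 + ((2*k : ℕ) : Fin (d+1))) + 1) + 2 by ring]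
          exact le_trans ih2 g2
  obtain ⟨t, ht⟩ := hde
  have e1 : ((2*(t+1) : ℕ) : Fin (d+1)) = (1 : Fin (d+1)) := by
    rw [show (2*(t+1) : ℕ) = (d+1)+1 by omega, fin_dp2_cast]
  have := (halt (t+1)).1
  rw [e1] at this
  omega

end Stmt11Aux

open Fin.CommRing in
theorem stmt11 (d : ℕ) (hd : 2 ≤ d) (hde : Even d) (m : ℤ) (hm : 1 ≤ m) :
    (∀ w : Fin (d+1) → ℤ, (∃ i j, w i ≠ w j) →
      2 * m ≤ (Finset.univ.sup' Finset.univ_nonempty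
                  (fun i : Fin (d+1) => ∑ j, w j * vvec d m i j))
              - (Finset.univ.inf' Finset.univ_nonempty
                  (fun i : Fin (d+1) => ∑ j, w j * vvec d m i j))) ∧
    (∃ w : Fin (d+1) → ℤ, (∃ i j, w i ≠ w j) ∧
      (Finset.univ.sup' Finset.univ_nonempty
                  (fun i : Fin (d+1) => ∑ j, w j * vvec d m i j))
              - (Finset.univ.inf' Finset.univ_nonempty
                  (fun i : Fin (d+1) => ∑ j, w j * vvec d m i j)) = 2 * m) := by
  have h1 : (1 : Fin (d+1)) ≠ 0 := Stmt11Aux.fin_one_ne_zero d hd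
  have h2 : (2 : Fin (d+1)) ≠ 0 := Stmt11Aux.fin_two_ne_zero d hd
  constructor
  · intro w hw
    obtain ⟨a, b, hab, hga, hgb⟩ := Stmt11Aux.key_pair d hd hde w hw
    have hfa : ∑ j, w j * vvec d m a j = w a + m * (w (a+1) - w (a-1)) :=
      Stmt11Aux.sum_vvec d hd m w a
    have hfb : ∑ j, w j * vvec d m b j = w b + m * (w (b+1) - w (b-1)) :=
      Stmt11Aux.sum_vvec d hd m w b
    have hsup : ∑ j, w j * vvec d m a j ≤ Finset.univ.sup' Finset.univ_nonempty
        (fun i : Fin (d+1) => ∑ j, w j * vvec d m i j) :=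
      Finset.le_sup' (fun i : Fin (d+1) => ∑ j, w j * vvec d m i j) (Finset.mem_univ a)
    have hinf : Finset.univ.inf' Finset.univ_nonempty
        (fun i : Fin (d+1) => ∑ j, w j * vvec d m i j) ≤ ∑ j, w j * vvec d m b j :=
      Finset.inf'_le (fun i : Fin (d+1) => ∑ j, w j * vvec d m i j) (Finset.mem_univ b)
    rw [hfa] at hsup
    rw [hfb] at hinf
    nlinarith [hsup, hinf, hab, hga, hgb, hm]
  · refine ⟨fun j => if j = 0 then 1 else 0, ⟨0, 1, by simp [h1]⟩, ?_⟩
    set w : Fin (d+1) → ℤ := fun j => if j = 0 then 1 else 0 with hwdef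
    have hf : ∀ i, ∑ j, w j * vvec d m i j = w i + m * (w (i+1) - w (i-1)) :=
      Stmt11Aux.sum_vvec d hd m w
    -- pointwise bounds
    have hbnd : ∀ i : Fin (d+1), -m ≤ w i + m * (w (i+1) - w (i-1)) ∧
        w i + m * (w (i+1) - w (i-1)) ≤ m := by
      intro i
      rcases eq_or_ne i 0 with e1 | e1
      · subst e1
        have hv1 : w 0 = 1 := if_pos rfl
        have hv2 : w (0+1) = 0 := if_neg (by
          intro h; exact h1 (by linear_combination h))
        have hv3 : w (0-1) = 0 := if_neg (by
          intro h; exact h1 (by linear_combination -h))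
        rw [hv1, hv2, hv3]
        constructor <;> nlinarith
      · have hv1 : w i = 0 := if_neg e1
        rcases eq_or_ne (i+1) 0 with e2 | e2
        · have hv2 : w (i+1) = 1 := if_pos e2
          have hv3 : w (i-1) = 0 := if_neg (by
            intro h; exact h2 (by linear_combination e2 - h))
          rw [hv1, hv2, hv3]
          constructor <;> nlinarith
        · have hv2 : w (i+1) = 0 := if_neg e2
          rcases eq_or_ne (i-1) 0 with e3 | e3
          · have hv3 : w (i-1) = 1 := if_pos e3
            rw [hv1, hv2, hv3]
            constructor <;> nlinarith
          · have hv3 : w (i-1) = 0 := if_neg e3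
            rw [hv1, hv2, hv3]
            constructor <;> nlinarith
    have hsup : Finset.univ.sup' Finset.univ_nonempty
        (fun i : Fin (d+1) => ∑ j, w j * vvec d m i j) = m := by
      apply le_antisymm
      · apply Finset.sup'_le
        intro i _
        rw [hf i]
        exact (hbnd i).2
      · have hle := Finset.le_sup' (fun i : Fin (d+1) => ∑ j, w j * vvec d m i j)
          (Finset.mem_univ (-1 : Fin (d+1)))
        refine le_trans ?_ hle
        rw [hf (-1)]
        have hv1 : w (-1) = 0 := if_neg (by
          intro h; exact h1 (by linear_combination -h))
        have hv2 : w ((-1) + 1) = 1 := by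
          rw [show (-1 : Fin (d+1)) + 1 = 0 by ring]
          exact if_pos rfl
        have hv3 : w ((-1) - 1) = 0 := if_neg (by
          intro h; exact h2 (by linear_combination -h))
        rw [hv1, hv2, hv3]
        nlinarith
    have hinf : Finset.univ.inf' Finset.univ_nonempty
        (fun i : Fin (d+1) => ∑ j, w j * vvec d m i j) = -m := by
      apply le_antisymm
      · have hle := Finset.inf'_le (fun i : Fin (d+1) => ∑ j, w j * vvec d m i j)
          (Finset.mem_univ (1 : Fin (d+1)))
        refine le_trans hle ?_
        rw [hf 1]
        have hv1 : w 1 = 0 := if_neg h1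
        have hv2 : w (1 + 1) = 0 := if_neg (by
          intro h; exact h2 (by linear_combination h))
        have hv3 : w (1 - 1) = 1 := by
          rw [show (1 : Fin (d+1)) - 1 = 0 by ring]
          exact if_pos rfl
        rw [hv1, hv2, hv3]
        nlinarith
      · apply Finset.le_inf'
        intro i _
        rw [hf i]
        exact (hbnd i).1
    rw [hsup, hinf]
    ring
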